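/- Let d ≥ 1 be a natural number and R ≥ 1 a real number. Then for every real ℓ ≤ R², one has ∫_{−∞}^{ℓ} e^h (1 − h/R²)^{d−1} dh ≤ d! · e^ℓ · (max(−(ℓ − 1), 1))^{d−1}. -/

import Mathlib

open MeasureTheory Set Filter Topology

private lemma tendsto_aux (c : ℝ) (n : ℕ) {a : ℝ} (ha : 0 < a) :
    Tendsto (fun h : ℝ => Real.exp (a * h) * (1 - c * h) ^ n) atBot (𝓝 0) := by
  have hcomp : Tendsto (fun h : ℝ => -(a * h)) atBot atTop := by
    apply tendsto_neg_atBot_atTop.comp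
    exact (tendsto_const_mul_atBot_of_pos ha).mpr tendsto_id
  have := (Polynomial.tendsto_div_exp_atTop
    ((1 + Polynomial.C (c / a) * Polynomial.X) ^ n)).comp hcomp
  refine this.congr fun h => ?_
  simp only [Function.comp_apply, Polynomial.eval_pow, Polynomial.eval_add,
    Polynomial.eval_one, Polynomial.eval_mul, Polynomial.eval_C, Polynomial.eval_X]
  rw [Real.exp_neg, div_eq_mul_inv, inv_inv, mul_comm]
  congr 2
  field_simp
  ring

private lemma integrableOn_exp_half_Iic (c : ℝ) :
    IntegrableOn (fun x : ℝ => Real.exp (x / 2)) (Set.Iic c) := by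
  refine integrableOn_Iic_of_intervalIntegral_norm_bounded (l := atBot) (a := fun i : ℝ => i)
    (2 * Real.exp (c / 2)) c (fun i => ?_) tendsto_id ?_
  · exact ((Real.continuous_exp.comp (continuous_id.div_const 2)).integrableOn_Ioc)
  · filter_upwards with i
    have hnorm : ∀ x : ℝ, ‖Real.exp (x / 2)‖ = Real.exp (x / 2) := fun x =>
      Real.norm_of_nonneg (Real.exp_pos _).le
    simp only [hnorm]
    have : (∫ x in i..c, Real.exp (x / 2)) = 2 * (Real.exp (c / 2) - Real.exp (i / 2)) := by
      rw [intervalIntegral.integral_comp_div Real.exp (by norm_num : (2:ℝ) ≠ 0),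
        integral_exp, smul_eq_mul]
    rw [this]
    nlinarith [(Real.exp_pos (i / 2)).le]

private lemma integrableOn_aux (c : ℝ) (n : ℕ) (ℓ : ℝ) :
    IntegrableOn (fun h : ℝ => Real.exp h * (1 - c * h) ^ n) (Set.Iic ℓ) := by
  have hcont : Continuous fun h : ℝ => Real.exp h * (1 - c * h) ^ n := by continuity
  refine LocallyIntegrableOn.integrableOn_of_isBigO_atBot
    (g := fun x : ℝ => Real.exp (x / 2))
    ((hcont.continuousOn).locallyIntegrableOn measurableSet_Iic) ?_
    ⟨Set.Iic 0, Iic_mem_atBot 0, integrableOn_exp_half_Iic 0⟩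
  have ht : Tendsto (fun h : ℝ => Real.exp ((1/2 : ℝ) * h) * (1 - c * h) ^ n) atBot (𝓝 0) :=
    tendsto_aux c n (by norm_num)
  have h1 : (fun h : ℝ => Real.exp ((1/2:ℝ) * h) * (1 - c * h) ^ n) =O[atBot]
      (fun _ : ℝ => (1:ℝ)) := ht.isBigO_one ℝ
  have h2 := (Asymptotics.isBigO_refl (fun x : ℝ => Real.exp (x / 2)) atBot).mul h1
  refine h2.congr (fun x => ?_) (fun x => mul_one _)
  rw [← mul_assoc, ← Real.exp_add]
  ring_nf

private lemma ibp_aux (c : ℝ) (n : ℕ) (ℓ : ℝ) :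
    (∫ h in Set.Iic ℓ, Real.exp h * (1 - c * h) ^ (n + 1))
      = Real.exp ℓ * (1 - c * ℓ) ^ (n + 1)
        + c * (n + 1) * ∫ h in Set.Iic ℓ, Real.exp h * (1 - c * h) ^ n := by
  have hderiv : ∀ x ∈ Set.Iic ℓ, HasDerivAt (fun h : ℝ => Real.exp h * (1 - c * h) ^ (n + 1))
      (Real.exp x * (1 - c * x) ^ (n + 1) - c * (n + 1) * (Real.exp x * (1 - c * x) ^ n)) x := by
    intro x _
    have h1 : HasDerivAt (fun h : ℝ => (1 - c * h) ^ (n + 1))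
        (((n : ℝ) + 1) * (1 - c * x) ^ n * (-c)) x := by
      have hb : HasDerivAt (fun h : ℝ => 1 - c * h) (-c) x := by
        simpa using ((hasDerivAt_id x).const_mul c).const_sub 1
      have := (hasDerivAt_pow (n + 1) (1 - c * x)).comp x hb
      simpa [Nat.add_sub_cancel, Function.comp_def] using this
    have : HasDerivAt (fun h : ℝ => Real.exp h * (1 - c * h) ^ (n + 1)) _ x :=
      (Real.hasDerivAt_exp x).mul h1
    convert this using 1
    ring
  have hint : IntegrableOn (fun x : ℝ =>
      Real.exp x * (1 - c * x) ^ (n + 1) - c * (n + 1) * (Real.exp x * (1 - c * x) ^ n))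
      (Set.Iic ℓ) :=
    (integrableOn_aux c (n + 1) ℓ).sub ((integrableOn_aux c n ℓ).const_mul _)
  have htend : Tendsto (fun h : ℝ => Real.exp h * (1 - c * h) ^ (n + 1)) atBot (𝓝 0) := by
    have := tendsto_aux c (n + 1) (a := 1) one_pos
    simpa using this
  have key := integral_Iic_of_hasDerivAt_of_tendsto' hderiv hint htend
  rw [sub_zero] at key
  have hsplit : (∫ x in Set.Iic ℓ, (Real.exp x * (1 - c * x) ^ (n + 1)
        - c * (n + 1) * (Real.exp x * (1 - c * x) ^ n)))
      = (∫ x in Set.Iic ℓ, Real.exp x * (1 - c * x) ^ (n + 1))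
        - c * (n + 1) * ∫ x in Set.Iic ℓ, Real.exp x * (1 - c * x) ^ n := by
    rw [integral_sub (integrableOn_aux c (n + 1) ℓ)
      ((integrableOn_aux c n ℓ).const_mul _), integral_const_mul]
  rw [hsplit] at key
  push_cast
  linarith

private lemma key_aux (c : ℝ) (hc0 : 0 ≤ c) (hc1 : c ≤ 1) (ℓ : ℝ) (hℓ : c * ℓ ≤ 1) (n : ℕ) :
    (∫ h in Set.Iic ℓ, Real.exp h * (1 - c * h) ^ n)
      ≤ (Nat.factorial (n + 1) : ℝ) * Real.exp ℓ * (max (1 - ℓ) 1) ^ n := by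
  induction n with
  | zero => simp [integral_exp_Iic]
  | succ n ih =>
    set M : ℝ := max (1 - ℓ) 1 with hM
    have hM1 : (1 : ℝ) ≤ M := le_max_right _ _
    have hMn : M ^ n ≤ M ^ (n + 1) := pow_le_pow_right₀ hM1 (Nat.le_succ n)
    have hcℓ0 : 0 ≤ 1 - c * ℓ := by linarith
    have hcℓM : 1 - c * ℓ ≤ M := by
      rcases le_or_gt 0 ℓ with h | h
      · have : c * ℓ ≥ 0 := mul_nonneg hc0 h
        calc 1 - c * ℓ ≤ 1 := by linarith
          _ ≤ M := hM1
      · have : c * ℓ ≥ ℓ := by nlinarith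
        calc 1 - c * ℓ ≤ 1 - ℓ := by linarith
          _ ≤ M := le_max_left _ _
    have hpow : (1 - c * ℓ) ^ (n + 1) ≤ M ^ (n + 1) := pow_le_pow_left₀ hcℓ0 hcℓM _
    have hexp := (Real.exp_pos ℓ).le
    have hInonneg : 0 ≤ ∫ h in Set.Iic ℓ, Real.exp h * (1 - c * h) ^ n := by
      apply integral_nonneg_of_ae
      filter_upwards [ae_restrict_mem measurableSet_Iic] with x hx
      have hx1 : 0 ≤ 1 - c * x := by
        rcases le_or_gt 0 x with h | h
        · nlinarith [(mem_Iic.mp hx : x ≤ ℓ)]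
        · nlinarith
      positivity
    rw [ibp_aux]
    have step1 : c * (n + 1) * (∫ h in Set.Iic ℓ, Real.exp h * (1 - c * h) ^ n)
        ≤ (n + 1) * ((Nat.factorial (n + 1) : ℝ) * Real.exp ℓ * M ^ n) := by
      have h1 : c * (n + 1) ≤ (n + 1 : ℝ) := by nlinarith [Nat.cast_nonneg (α := ℝ) n]
      calc c * (n + 1) * (∫ h in Set.Iic ℓ, Real.exp h * (1 - c * h) ^ n)
          ≤ (n + 1) * (∫ h in Set.Iic ℓ, Real.exp h * (1 - c * h) ^ n) :=
            mul_le_mul_of_nonneg_right h1 hInonneg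
        _ ≤ (n + 1) * ((Nat.factorial (n + 1) : ℝ) * Real.exp ℓ * M ^ n) := by
            apply mul_le_mul_of_nonneg_left ih; positivity
    have hfac : (Nat.factorial (n + 1 + 1) : ℝ) = (n + 2) * (Nat.factorial (n + 1) : ℝ) := by
      rw [Nat.factorial_succ]; push_cast; ring
    have hfac1 : (1 : ℝ) ≤ (Nat.factorial (n + 1) : ℝ) := by
      exact_mod_cast Nat.one_le_iff_ne_zero.mpr (Nat.factorial_ne_zero _)
    have hMpos : 0 < M ^ n := by positivity
    calc Real.exp ℓ * (1 - c * ℓ) ^ (n + 1)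
          + c * (n + 1) * ∫ h in Set.Iic ℓ, Real.exp h * (1 - c * h) ^ n
        ≤ Real.exp ℓ * M ^ (n + 1)
          + (n + 1) * ((Nat.factorial (n + 1) : ℝ) * Real.exp ℓ * M ^ n) := by
          have := mul_le_mul_of_nonneg_left hpow hexp
          linarith [step1]
      _ ≤ (Nat.factorial (n + 1 + 1) : ℝ) * Real.exp ℓ * M ^ (n + 1) := by
          rw [hfac]
          have h1 : (n + 1) * ((Nat.factorial (n + 1) : ℝ) * Real.exp ℓ * M ^ n)
              ≤ (n + 1) * ((Nat.factorial (n + 1) : ℝ) * Real.exp ℓ * M ^ (n + 1)) := by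
            have : (Nat.factorial (n + 1) : ℝ) * Real.exp ℓ * M ^ n
                ≤ (Nat.factorial (n + 1) : ℝ) * Real.exp ℓ * M ^ (n + 1) := by
              apply mul_le_mul_of_nonneg_left hMn; positivity
            apply mul_le_mul_of_nonneg_left this; positivity
          have h2 : Real.exp ℓ * M ^ (n + 1)
              ≤ (Nat.factorial (n + 1) : ℝ) * Real.exp ℓ * M ^ (n + 1) := by
            nlinarith [mul_nonneg hexp (pow_nonneg (le_trans zero_le_one hM1) (n + 1)), hfac1]
          calc Real.exp ℓ * M ^ (n + 1)
                + (n + 1) * ((Nat.factorial (n + 1) : ℝ) * Real.exp ℓ * M ^ n)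
              ≤ (Nat.factorial (n + 1) : ℝ) * Real.exp ℓ * M ^ (n + 1)
                + (n + 1) * ((Nat.factorial (n + 1) : ℝ) * Real.exp ℓ * M ^ (n + 1)) := by
                linarith
            _ = ((n : ℝ) + 2) * (Nat.factorial (n + 1) : ℝ) * Real.exp ℓ * M ^ (n + 1) := by
                ring

theorem integral_exp_mul_pow_le (d : ℕ) (hd : 1 ≤ d) (R : ℝ) (hR : 1 ≤ R)
    (ℓ : ℝ) (hℓ : ℓ ≤ R ^ 2) :
    (∫ h in Set.Iic ℓ, Real.exp h * (1 - h / R ^ 2) ^ (d - 1))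
      ≤ (Nat.factorial d : ℝ) * Real.exp ℓ * (max (-(ℓ - 1)) 1) ^ (d - 1) := by
  obtain ⟨n, rfl⟩ : ∃ n, d = n + 1 := ⟨d - 1, (Nat.succ_pred_eq_of_pos hd).symm⟩
  have hR2 : (1 : ℝ) ≤ R ^ 2 := by nlinarith
  have hR2pos : (0 : ℝ) < R ^ 2 := by linarith
  set c : ℝ := (R ^ 2)⁻¹ with hc
  have hc0 : 0 ≤ c := by positivity
  have hc1 : c ≤ 1 := by rw [hc]; exact inv_le_one_of_one_le₀ hR2
  have hcℓ : c * ℓ ≤ 1 := by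
    rw [hc, inv_mul_le_iff₀ hR2pos]; linarith
  have hdiv : ∀ h : ℝ, h / R ^ 2 = c * h := fun h => by
    rw [hc, div_eq_mul_inv, mul_comm]
  have hmax : max (-(ℓ - 1)) 1 = max (1 - ℓ) 1 := by rw [neg_sub]
  simp only [hdiv, hmax, Nat.add_sub_cancel]
  exact key_aux c hc0 hc1 ℓ hcℓ n
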